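/- For every k ∈ {1,…,n−1} and every δ ∈ (0,1), the function ε ↦ D1(ε;k) + D2(ε;k) is strictly convex on the interval (0,1). -/

import Mathlib

open Finset

section Aux
open Set

private lemma hasDerivAt_mono (z w : ℤ) {x : ℝ} (hx : x ≠ 0) (hx1 : (1:ℝ) - x ≠ 0) :
    HasDerivAt (fun y : ℝ => y ^ z * (1 - y) ^ w)
      ((z : ℝ) * x ^ (z - 1) * (1 - x) ^ w - (w : ℝ) * x ^ z * (1 - x) ^ (w - 1)) x := by
  have h1 : HasDerivAt (fun y : ℝ => (1 : ℝ) - y) (-1) x := by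
    simpa using (hasDerivAt_id x).const_sub 1
  have h2 : HasDerivAt (fun y : ℝ => (1 - y) ^ w) ((w : ℝ) * (1 - x) ^ (w - 1) * (-1)) x :=
    (hasDerivAt_zpow w (1 - x) (Or.inl hx1)).comp x h1
  have h3 := (hasDerivAt_zpow z x (Or.inl hx)).mul h2
  exact h3.congr_deriv (by ring)

private lemma quad_pos (a b x : ℝ) (ha : 0 ≤ a * (a - 1)) (hb : b ≤ -1)
    (hx0 : 0 < x) (hx1 : x < 1) :
    0 < a * (a - 1) * (1 - x) ^ 2 - 2 * a * b * (x * (1 - x)) + b * (b - 1) * x ^ 2 := by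
  have hu : 0 < 1 - x := by linarith
  rcases le_or_gt a 0 with h | h
  · -- a ≤ 0 : discriminant nonpositive
    have hab : 0 ≤ a * b := by nlinarith
    nlinarith [sq_nonneg (a * (1 - x) - b * x), sq_nonneg (a * (1 - x) + b * x),
      mul_pos hx0 hu, mul_nonneg hab (by linarith : (0:ℝ) ≤ 1 - a - b),
      mul_nonneg (mul_nonneg hab (by linarith : (0:ℝ) ≤ 1 - a - b)) (mul_pos hx0 hu).le,
      sq_nonneg x, mul_pos (mul_pos hx0 hx0) (by nlinarith : (0:ℝ) < b * (b - 1))]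
  · -- a > 0 : all terms nonneg, last positive
    have ha1 : 1 ≤ a := by nlinarith
    have : 0 ≤ -2 * a * b * (x * (1 - x)) := by
      have : a * b ≤ 0 := mul_nonpos_of_nonneg_of_nonpos (by linarith) (by linarith)
      nlinarith [mul_pos hx0 hu]
    nlinarith [mul_pos (mul_pos hx0 hx0) (by nlinarith : (0:ℝ) < b * (b - 1)),
      mul_nonneg ha (sq_nonneg (1 - x))]

private lemma strictConvexOn_mono (z : ℤ) (p : ℕ) (hp : 1 ≤ p) :
    StrictConvexOn ℝ (Ioo (0:ℝ) 1) (fun x : ℝ => x ^ z * (1 - x) ^ (-(p:ℤ))) := by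
  set w : ℤ := -(p:ℤ) with hw
  have hwle : (w : ℝ) ≤ -1 := by
    have h1 : (1:ℝ) ≤ (p:ℝ) := by exact_mod_cast hp
    simp only [hw]; push_cast; linarith
  apply strictConvexOn_of_deriv2_pos (convex_Ioo 0 1)
  · intro x hx
    exact ((continuousAt_id.zpow₀ z (Or.inl (ne_of_gt hx.1))).mul
      (((continuous_const.sub continuous_id).continuousAt).zpow₀ w
        (Or.inl (sub_ne_zero_of_ne (ne_of_gt hx.2))))).continuousWithinAt
  · intro x hx
    rw [interior_Ioo] at hx
    obtain ⟨hx0, hx1⟩ := hx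
    have hxne : x ≠ 0 := ne_of_gt hx0
    have h1ne : (1:ℝ) - x ≠ 0 := by intro h; linarith
    set g : ℝ → ℝ := fun y =>
      ((z : ℝ)) * (y ^ (z - 1) * (1 - y) ^ w) - ((w : ℝ)) * (y ^ z * (1 - y) ^ (w - 1)) with hg
    have hev : deriv (fun y : ℝ => y ^ z * (1 - y) ^ w) =ᶠ[nhds x] g := by
      filter_upwards [Ioo_mem_nhds hx0 hx1] with y hy
      rw [(hasDerivAt_mono z w (ne_of_gt hy.1) (sub_ne_zero_of_ne (ne_of_gt hy.2))).deriv]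
      simp only [hg]; ring
    have key : deriv^[2] (fun y : ℝ => y ^ z * (1 - y) ^ w) x = deriv g x := by
      simp only [Function.iterate_succ, Function.iterate_zero, Function.comp_apply, id]
      exact Filter.EventuallyEq.deriv_eq hev
    rw [key]
    have hg1 := hasDerivAt_mono (z-1) w hxne h1ne
    have hg2 := hasDerivAt_mono z (w-1) hxne h1ne
    have hD := (hg1.const_mul ((z:ℝ))).sub (hg2.const_mul ((w:ℝ)))
    rw [show deriv g x = _ from hD.deriv]
    have hxz : x ^ (z - 1) = x ^ (z - 1 - 1) * x := by
      rw [← zpow_add_one₀ hxne]; ring_nf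
    have hxz2 : x ^ z = x ^ (z - 1 - 1) * x * x := by
      rw [← zpow_add_one₀ hxne, ← zpow_add_one₀ hxne]; ring_nf
    have hvw : (1 - x) ^ (w - 1) = (1 - x) ^ (w - 1 - 1) * (1 - x) := by
      rw [← zpow_add_one₀ h1ne]; ring_nf
    have hvw2 : (1 - x) ^ w = (1 - x) ^ (w - 1 - 1) * (1 - x) * (1 - x) := by
      rw [← zpow_add_one₀ h1ne, ← zpow_add_one₀ h1ne]; ring_nf
    rw [hxz, hxz2, hvw, hvw2]
    have hP : 0 < x ^ (z - 1 - 1) := zpow_pos hx0 _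
    have hQ : 0 < (1 - x) ^ (w - 1 - 1) := zpow_pos (by linarith) _
    have hzz : (0:ℤ) ≤ z * (z - 1) := by
      rcases le_or_gt z 0 with h | h
      · have := mul_nonneg (neg_nonneg.mpr h) (by linarith : (0:ℤ) ≤ 1 - z)
        nlinarith
      · exact mul_nonneg (by linarith) (by omega)
    have hzzR : (0:ℝ) ≤ (z:ℝ) * ((z:ℝ) - 1) := by exact_mod_cast hzz
    have hq := quad_pos (z : ℝ) (w : ℝ) x hzzR hwle hx0 hx1
    push_cast
    nlinarith [mul_pos (mul_pos hP hQ) hq]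

private lemma strictConvexOn_congr {s : Set ℝ} {f g : ℝ → ℝ} (hf : StrictConvexOn ℝ s f)
    (h : ∀ x ∈ s, f x = g x) : StrictConvexOn ℝ s g :=
  ⟨hf.1, fun x hx y hy hxy a b ha hb hab => by
    rw [← h x hx, ← h y hy, ← h _ (hf.1 hx hy ha.le hb.le hab)]
    exact hf.2 hx hy hxy ha hb hab⟩

private lemma strictConvexOn_const_mul {s : Set ℝ} {f : ℝ → ℝ} {c : ℝ} (hc : 0 < c)
    (hf : StrictConvexOn ℝ s f) : StrictConvexOn ℝ s (fun x => c * f x) :=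
  ⟨hf.1, fun x hx y hy hxy a b ha hb hab => by
    simp only [smul_eq_mul]
    have := hf.2 hx hy hxy ha hb hab
    simp only [smul_eq_mul] at this
    nlinarith⟩

private lemma convexOn_sum {s : Set ℝ} (hs : Convex ℝ s) {ι : Type*} (t : Finset ι)
    (f : ι → ℝ → ℝ) (hf : ∀ i ∈ t, ConvexOn ℝ s (f i)) :
    ConvexOn ℝ s (fun x => ∑ i ∈ t, f i x) := by
  classical
  induction t using Finset.induction_on with
  | empty => simpa using convexOn_const 0 hs
  | insert a t' hnot ih =>
    simp only [Finset.sum_insert hnot]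
    exact (hf a (Finset.mem_insert_self a t')).add
      (ih fun i hi => hf i (Finset.mem_insert_of_mem hi))


end Aux

/-- `D1(ε;k) = ((1−δ)/C(n−1,n−k−1))·ε^{−(n−k−1)}·(1−ε)^{−(k+1)}`. -/
noncomputable def D1 (n k : ℕ) (δ ε : ℝ) : ℝ :=
  ((1 - δ) / ((n - 1).choose (n - k - 1) : ℝ)) * (ε ^ (n - k - 1))⁻¹ *
    ((1 - ε) ^ (k + 1))⁻¹

/-- `D2(ε;k) = δ·Σ_{q=0}^{k} (C(n−1,n−k−1+q)/C(n−1,n−k−1))·ε^q·(1−ε)^{−(q+1)}`. -/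
noncomputable def D2 (n k : ℕ) (δ ε : ℝ) : ℝ :=
  δ * ∑ q ∈ range (k + 1),
    (((n - 1).choose (n - k - 1 + q) : ℝ) / ((n - 1).choose (n - k - 1) : ℝ)) *
      ε ^ q * ((1 - ε) ^ (q + 1))⁻¹

/-- For every `k ∈ {1,…,n−1}` and every `δ ∈ (0,1)`, the function
`ε ↦ D1(ε;k) + D2(ε;k)` is strictly convex on `(0,1)`. -/
theorem D1_add_D2_strictConvexOn (n : ℕ) (hn : 2 ≤ n)
    (k : ℕ) (hk1 : 1 ≤ k) (hk2 : k ≤ n - 1)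
    (δ : ℝ) (hδ0 : 0 < δ) (hδ1 : δ < 1) :
    StrictConvexOn ℝ (Set.Ioo (0 : ℝ) 1) (fun ε => D1 n k δ ε + D2 n k δ ε) := by
  set m : ℕ := n - k - 1 with hm
  have hchoose : 0 < ((n - 1).choose m : ℝ) := by
    exact_mod_cast Nat.choose_pos (by omega)
  have hc1 : 0 < (1 - δ) / ((n - 1).choose m : ℝ) := div_pos (by linarith) hchoose
  have hF1 : StrictConvexOn ℝ (Set.Ioo (0:ℝ) 1)
      (fun ε => ((1 - δ) / ((n - 1).choose m : ℝ)) * (ε ^ (-(m:ℤ)) * (1 - ε) ^ (-((k+1 : ℕ):ℤ)))) :=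
    strictConvexOn_const_mul hc1 (strictConvexOn_mono (-(m:ℤ)) (k+1) (by omega))
  have hF2 : ConvexOn ℝ (Set.Ioo (0:ℝ) 1)
      (fun ε => ∑ q ∈ range (k+1),
        (δ * (((n - 1).choose (m + q) : ℝ) / ((n - 1).choose m : ℝ))) *
          (ε ^ (q:ℤ) * (1 - ε) ^ (-((q+1 : ℕ):ℤ)))) := by
    apply convexOn_sum (convex_Ioo 0 1)
    intro q _
    have hcq : 0 ≤ δ * (((n - 1).choose (m + q) : ℝ) / ((n - 1).choose m : ℝ)) :=
      mul_nonneg hδ0.le (div_nonneg (Nat.cast_nonneg _) (Nat.cast_nonneg _))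
    simpa [smul_eq_mul] using
      (ConvexOn.smul hcq (strictConvexOn_mono (q:ℤ) (q+1) (by omega)).convexOn)
  refine strictConvexOn_congr (hF1.add_convexOn hF2) ?_
  intro x hx
  simp only [Pi.add_apply, D1, D2, zpow_neg, zpow_natCast, Finset.mul_sum, ← hm]
  congr 1
  · ring
  · exact Finset.sum_congr rfl fun q _ => by ring
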